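/- Suppose 𝕂 has characteristic zero. Let k be an integer with 1 ≤ k < n such that b ∉ N_G(⟨a^k⟩). In 𝕂G define x₊ = (a-1)(Δ_k(a) + bâ), y₊ = (a-1)(Δ_k(a) + a^k bâ), x₋ = (a-1)(Δ_{-k}(a) - a^{-k} bâ), and y₋ = (a-1)(Δ_{-k}(a) - bâ), where Δ_k(a) = Σ_{i=0}^{k-1} a^i and Δ_{-k}(a) = Σ_{i=0}^{n-k-1} a^i. Then for every z_α ∈ {x₊, y₊} and every z_β ∈ {x₊, x₋, y₊, y₋} one has z_α·z_β = Δ_k(a)(a-1)·z_β ≠ 0, and for every z_α ∈ {x₋, y₋} and every z_β ∈ {x₊, x₋, y₊, y₋} one has z_α·z_β = Δ_{-k}(a)(a-1)·z_β ≠ 0. -/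

import Mathlib

open MonoidAlgebra Finsupp Finset

theorem aux_ne {𝕂 : Type*} [CommRing 𝕂] [IsDomain 𝕂] [CharZero 𝕂]
    {G : Type*} [Group G] (a b : G) (n : ℕ) (hn : 2 ≤ n) (ha : orderOf a = n)
    (hbH : b ∉ Subgroup.zpowers a)
    (e e' : ℕ) (he1 : 1 ≤ e) (hen : e < n) (he'1 : 1 ≤ e') (he'n : e' < n)
    (hee : e = e' ∨ e + e' = n)
    (c : MonoidAlgebra 𝕂 G) (hc : ∀ g ∈ c.coeff.support, g ∉ Subgroup.zpowers a) :
    ((MonoidAlgebra.of 𝕂 G a) ^ e - 1) * ((MonoidAlgebra.of 𝕂 G a - 1) *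
      ((∑ i ∈ Finset.range e', (MonoidAlgebra.of 𝕂 G a) ^ i) +
        c * (∑ i ∈ Finset.range n, (MonoidAlgebra.of 𝕂 G a) ^ i))) ≠ 0 := by
  classical
  set A := MonoidAlgebra.of 𝕂 G a with hA
  set H := Subgroup.zpowers a with hH
  have hpow : ∀ m : ℕ, A ^ m = MonoidAlgebra.single (a ^ m) (1 : 𝕂) := by
    intro m
    rw [hA, ← map_pow, MonoidAlgebra.of_apply]
  have hne1 : ∀ m : ℕ, 1 ≤ m → m < n → a ^ m ≠ 1 := by
    intro m hm1 hmn h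
    have : n ∣ m := by rw [← ha]; exact orderOf_dvd_of_pow_eq_one h
    have := Nat.le_of_dvd (by omega) this
    omega
  -- commute
  have hcomm : Commute (A - 1) (∑ i ∈ Finset.range e', A ^ i) :=
    Commute.sum_right _ _ _ fun i _ =>
      (((Commute.refl A).pow_right i).sub_left (Commute.one_left (A ^ i)))
  have hfirst : (A - 1) * (∑ i ∈ Finset.range e', A ^ i) = A ^ e' - 1 := by
    rw [hcomm.eq, geom_sum_mul]
  -- decomposition
  have hX : ((A : MonoidAlgebra 𝕂 G) ^ e - 1) * ((A - 1) *
      ((∑ i ∈ Finset.range e', A ^ i) + c * (∑ i ∈ Finset.range n, A ^ i)))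
      = (A ^ e - 1) * (A ^ e' - 1)
        + ((A ^ e - 1) * (A - 1)) * (c * (∑ i ∈ Finset.range n, A ^ i)) := by
    rw [mul_add, mul_add, hfirst, ← mul_assoc, ← mul_assoc]
  -- support facts
  have hsinH : ∀ (g : G) (r : 𝕂), g ∈ H → ∀ g' ∈ (MonoidAlgebra.single g r).coeff.support, g' ∈ H := by
    intro g r hg g' hg'
    rw [MonoidAlgebra.coeff_single] at hg'
    have := Finsupp.support_single_subset hg'
    simp only [Finset.mem_singleton] at this
    rwa [this]
  have hmulH : ∀ x y : MonoidAlgebra 𝕂 G, (∀ g ∈ x.coeff.support, g ∈ H) → (∀ g ∈ y.coeff.support, g ∈ H) →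
      ∀ g ∈ (x * y).coeff.support, g ∈ H := by
    intro x y hx hy g hg
    obtain ⟨g1, hg1, g2, hg2, rfl⟩ := Finset.mem_mul.mp (MonoidAlgebra.support_coeff_mul_subset x y hg)
    exact H.mul_mem (hx _ hg1) (hy _ hg2)
  have hsubH : ∀ x y : MonoidAlgebra 𝕂 G, (∀ g ∈ x.coeff.support, g ∈ H) → (∀ g ∈ y.coeff.support, g ∈ H) →
      ∀ g ∈ (x - y).coeff.support, g ∈ H := by
    intro x y hx hy g hg
    rw [MonoidAlgebra.coeff_sub] at hg
    rcases Finset.mem_union.mp (Finsupp.support_sub hg) with h | h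
    · exact hx _ h
    · exact hy _ h
  have hpowH : ∀ m : ℕ, ∀ g ∈ ((A ^ m : MonoidAlgebra 𝕂 G)).coeff.support, g ∈ H := by
    intro m
    rw [hpow m]
    exact hsinH _ _ (H.pow_mem (Subgroup.mem_zpowers a) m)
  have honeH : ∀ g ∈ ((1 : MonoidAlgebra 𝕂 G)).coeff.support, g ∈ H := by
    rw [MonoidAlgebra.one_def]
    exact hsinH _ _ H.one_mem
  have hfH : ∀ g ∈ (((A : MonoidAlgebra 𝕂 G) ^ e - 1) * (A - 1)).coeff.support, g ∈ H := by
    refine hmulH _ _ (hsubH _ _ (hpowH e) honeH) (hsubH _ _ ?_ honeH)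
    have := hpowH 1
    rwa [pow_one] at this
  have hsumH : ∀ g ∈ (∑ i ∈ Finset.range n, (A : MonoidAlgebra 𝕂 G) ^ i).coeff.support, g ∈ H := by
    intro g hg
    rw [MonoidAlgebra.coeff_sum] at hg
    obtain ⟨i, _, hi⟩ := Finset.mem_biUnion.mp (Finsupp.support_finset_sum hg)
    exact hpowH i g hi
  -- the b-part vanishes on H
  have hvH : ∀ g₀ ∈ H,
      ((((A : MonoidAlgebra 𝕂 G) ^ e - 1) * (A - 1)) * (c * (∑ i ∈ Finset.range n, A ^ i))).coeff g₀ = 0 := by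
    intro g₀ hg₀
    by_contra hne
    have hmem : g₀ ∈ ((((A : MonoidAlgebra 𝕂 G) ^ e - 1) * (A - 1)) * (c * (∑ i ∈ Finset.range n, A ^ i))).coeff.support :=
      Finsupp.mem_support_iff.mpr hne
    obtain ⟨g1, hg1, g2, hg2, hprod⟩ := Finset.mem_mul.mp (MonoidAlgebra.support_coeff_mul_subset _ _ hmem)
    obtain ⟨g3, hg3, g4, hg4, hprod2⟩ := Finset.mem_mul.mp (MonoidAlgebra.support_coeff_mul_subset _ _ hg2)
    have hg1H : g1 ∈ H := hfH _ hg1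
    have hg4H : g4 ∈ H := hsumH _ hg4
    have : g3 ∈ H := by
      have : g3 = g1⁻¹ * g₀ * g4⁻¹ := by
        subst hprod2; rw [← hprod]; group
      rw [this]
      exact H.mul_mem (H.mul_mem (H.inv_mem hg1H) hg₀) (H.inv_mem hg4H)
    exact hc _ hg3 this
  -- the main part
  set u : MonoidAlgebra 𝕂 G := (A ^ e - 1) * (A ^ e' - 1) with hu
  have huexp : u = MonoidAlgebra.single (a ^ e * a ^ e') (1:𝕂) - MonoidAlgebra.single (a ^ e) 1
      - MonoidAlgebra.single (a ^ e') 1 + MonoidAlgebra.single 1 1 := by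
    rw [hu, hpow e, hpow e']
    simp only [mul_sub, sub_mul, MonoidAlgebra.single_mul_single, one_mul, mul_one,
      MonoidAlgebra.one_def]
    abel
  intro h0
  rcases hee with rfl | hsum
  · -- e = e', evaluate at a ^ e
    have hg₀H : a ^ e ∈ H := H.pow_mem (Subgroup.mem_zpowers a) e
    have h1 : a ^ e ≠ 1 := hne1 e he1 hen
    have h2 : a ^ e * a ^ e ≠ a ^ e := fun h => h1 (by rwa [mul_eq_right] at h)
    have heval : ((A ^ e - 1) * ((A - 1) *
        ((∑ i ∈ Finset.range e, A ^ i) + c * (∑ i ∈ Finset.range n, A ^ i)))).coeff (a ^ e) = -2 := by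
      rw [hX, MonoidAlgebra.coeff_add, Finsupp.add_apply, hvH _ hg₀H, add_zero, huexp]
      rw [MonoidAlgebra.coeff_add, MonoidAlgebra.coeff_sub, MonoidAlgebra.coeff_sub,
        Finsupp.add_apply, Finsupp.sub_apply, Finsupp.sub_apply, MonoidAlgebra.single_apply,
        MonoidAlgebra.single_apply, MonoidAlgebra.single_apply,
        if_neg h2, if_pos rfl, if_neg (show ¬(1:G) = a ^ e from fun h => h1 h.symm)]
      ring
    rw [h0] at heval
    simp only [MonoidAlgebra.coeff_zero, Finsupp.coe_zero, Pi.zero_apply] at heval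
    exact absurd heval.symm (by norm_num)
  · -- e + e' = n, evaluate at 1
    have h1 : a ^ e ≠ 1 := hne1 e he1 hen
    have h2 : a ^ e' ≠ 1 := hne1 e' he'1 he'n
    have h3 : a ^ e * a ^ e' = 1 := by
      rw [← pow_add, hsum, ← ha, pow_orderOf_eq_one]
    have heval : ((A ^ e - 1) * ((A - 1) *
        ((∑ i ∈ Finset.range e', A ^ i) + c * (∑ i ∈ Finset.range n, A ^ i)))).coeff (1 : G) = 2 := by
      rw [hX, MonoidAlgebra.coeff_add, Finsupp.add_apply, hvH _ H.one_mem, add_zero, huexp]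
      rw [MonoidAlgebra.coeff_add, MonoidAlgebra.coeff_sub, MonoidAlgebra.coeff_sub,
        Finsupp.add_apply, Finsupp.sub_apply, Finsupp.sub_apply, MonoidAlgebra.single_apply,
        MonoidAlgebra.single_apply, MonoidAlgebra.single_apply, MonoidAlgebra.single_apply,
        if_pos h3, if_neg h1, if_neg h2, if_pos rfl]
      ring
    rw [h0] at heval
    simp only [MonoidAlgebra.coeff_zero, Finsupp.coe_zero, Pi.zero_apply] at heval
    exact absurd heval.symm (by norm_num)

theorem stmt_13 {𝕂 : Type*} [CommRing 𝕂] [IsDomain 𝕂] [CharZero 𝕂]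
    {G : Type*} [Group G] (a b : G) (n : ℕ) (hn : 2 ≤ n) (ha : orderOf a = n)
    (hA : ¬ (Subgroup.zpowers a).Normal)
    (hb : b ∉ Subgroup.normalizer (Subgroup.zpowers a))
    (ahat : MonoidAlgebra 𝕂 G)
    (hahat : ahat = ∑ i ∈ Finset.range n, (MonoidAlgebra.of 𝕂 G a) ^ i)
    (k : ℕ) (hk1 : 1 ≤ k) (hkn : k < n)
    (hbk : b ∉ Subgroup.normalizer (Subgroup.zpowers (a ^ k)))
    (xp yp xm ym : MonoidAlgebra 𝕂 G)
    (hxp : xp = (MonoidAlgebra.of 𝕂 G a - 1) * ((∑ i ∈ Finset.range (k), (MonoidAlgebra.of 𝕂 G a) ^ i) + MonoidAlgebra.of 𝕂 G b * ahat))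
    (hyp : yp = (MonoidAlgebra.of 𝕂 G a - 1) *
        ((∑ i ∈ Finset.range (k), (MonoidAlgebra.of 𝕂 G a) ^ i) + MonoidAlgebra.of 𝕂 G a ^ k * MonoidAlgebra.of 𝕂 G b * ahat))
    (hxm : xm = (MonoidAlgebra.of 𝕂 G a - 1) *
        ((∑ i ∈ Finset.range (n - k), (MonoidAlgebra.of 𝕂 G a) ^ i) - MonoidAlgebra.of 𝕂 G (a ^ (-(k : ℤ))) * MonoidAlgebra.of 𝕂 G b * ahat))
    (hym : ym = (MonoidAlgebra.of 𝕂 G a - 1) *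
        ((∑ i ∈ Finset.range (n - k), (MonoidAlgebra.of 𝕂 G a) ^ i) - MonoidAlgebra.of 𝕂 G b * ahat)) :
    (∀ zα ∈ ({xp, yp} : Set (MonoidAlgebra 𝕂 G)),
      ∀ zβ ∈ ({xp, xm, yp, ym} : Set (MonoidAlgebra 𝕂 G)),
        zα * zβ = (∑ i ∈ Finset.range (k), (MonoidAlgebra.of 𝕂 G a) ^ i) * (MonoidAlgebra.of 𝕂 G a - 1) * zβ ∧ zα * zβ ≠ 0) ∧
    (∀ zα ∈ ({xm, ym} : Set (MonoidAlgebra 𝕂 G)),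
      ∀ zβ ∈ ({xp, xm, yp, ym} : Set (MonoidAlgebra 𝕂 G)),
        zα * zβ = (∑ i ∈ Finset.range (n - k), (MonoidAlgebra.of 𝕂 G a) ^ i) * (MonoidAlgebra.of 𝕂 G a - 1) * zβ ∧ zα * zβ ≠ 0) := by
  classical
  set A := MonoidAlgebra.of 𝕂 G a with hAdef
  set B := MonoidAlgebra.of 𝕂 G b with hBdef
  set C := MonoidAlgebra.of 𝕂 G (a ^ (-(k : ℤ))) with hCdef
  set H := Subgroup.zpowers a with hHdef
  have hbH : b ∉ H := fun h => hb (Subgroup.le_normalizer h)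
  have hAn : A ^ n = 1 := by
    rw [hAdef, ← map_pow, ← ha, pow_orderOf_eq_one, map_one]
  have hhat0 : ahat * (A - 1) = 0 := by
    rw [hahat, geom_sum_mul, hAn, sub_self]
  have hcommΔ : ∀ m : ℕ, Commute (A - 1) (∑ i ∈ Finset.range m, A ^ i) := fun m =>
    Commute.sum_right _ _ _ fun i _ =>
      ((Commute.refl A).pow_right i).sub_left (Commute.one_left (A ^ i))
  -- canonical forms
  have hxp' : xp = (A - 1) * ((∑ i ∈ Finset.range k, A ^ i) + B * ahat) := hxp
  have hyp' : yp = (A - 1) * ((∑ i ∈ Finset.range k, A ^ i) + (A ^ k * B) * ahat) := hyp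
  have hxm' : xm = (A - 1) * ((∑ i ∈ Finset.range (n - k), A ^ i) + (-(C * B)) * ahat) := by
    rw [hxm, sub_eq_add_neg (∑ i ∈ Finset.range (n - k), A ^ i) (C * B * ahat), ← neg_mul]
  have hym' : ym = (A - 1) * ((∑ i ∈ Finset.range (n - k), A ^ i) + (-B) * ahat) := by
    rw [hym, sub_eq_add_neg (∑ i ∈ Finset.range (n - k), A ^ i) (B * ahat), ← neg_mul]
  -- support conditions on coefficients
  have hgen : ∀ x : G, x ∈ H → ∀ g ∈ ((MonoidAlgebra.single x (1 : 𝕂)) * B).coeff.support, g ∉ H := by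
    intro x hx g hg hgH
    rw [hBdef, MonoidAlgebra.of_apply, MonoidAlgebra.single_mul_single, one_mul,
      MonoidAlgebra.coeff_single] at hg
    have := Finsupp.support_single_subset hg
    simp only [Finset.mem_singleton] at this
    subst this
    exact hbH (by simpa using H.mul_mem (H.inv_mem hx) hgH)
  have hcB : ∀ g ∈ B.coeff.support, g ∉ H := by
    have := hgen 1 H.one_mem
    rwa [← MonoidAlgebra.one_def, one_mul] at this
  have hcnB : ∀ g ∈ (-B).coeff.support, g ∉ H := by
    intro g hg
    exact hcB g (by rwa [MonoidAlgebra.coeff_neg, Finsupp.support_neg] at hg)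
  have hcAB : ∀ g ∈ ((A ^ k * B)).coeff.support, g ∉ H := by
    have hk : A ^ k = MonoidAlgebra.single (a ^ k) (1 : 𝕂) := by
      rw [hAdef, ← map_pow, MonoidAlgebra.of_apply]
    rw [hk]
    exact hgen _ (H.pow_mem (Subgroup.mem_zpowers a) k)
  have hcCB : ∀ g ∈ (-(C * B)).coeff.support, g ∉ H := by
    intro g hg
    rw [MonoidAlgebra.coeff_neg, Finsupp.support_neg] at hg
    have hC : C = MonoidAlgebra.single (a ^ (-(k : ℤ))) (1 : 𝕂) := by
      rw [hCdef, MonoidAlgebra.of_apply]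
    rw [hC] at hg
    exact hgen _ (H.zpow_mem (Subgroup.mem_zpowers a) _) g hg
  -- the two key sub-lemmas
  have EQ : ∀ (Δ c w : MonoidAlgebra 𝕂 G), Commute (A - 1) Δ →
      ((A - 1) * (Δ + c * ahat)) * ((A - 1) * w) = Δ * (A - 1) * ((A - 1) * w) := by
    intro Δ c w hcomm
    have h1 : (Δ + c * ahat) * (A - 1) = Δ * (A - 1) := by
      rw [add_mul, mul_assoc, hhat0, mul_zero, add_zero]
    calc ((A - 1) * (Δ + c * ahat)) * ((A - 1) * w)
        = (A - 1) * (((Δ + c * ahat) * (A - 1)) * w) := by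
          rw [mul_assoc, ← mul_assoc (Δ + c * ahat)]
      _ = (A - 1) * ((Δ * (A - 1)) * w) := by rw [h1]
      _ = ((A - 1) * Δ) * ((A - 1) * w) := by
          rw [mul_assoc Δ, ← mul_assoc]
      _ = Δ * (A - 1) * ((A - 1) * w) := by rw [hcomm.eq]
  have MAIN : ∀ (e e' : ℕ), 1 ≤ e → e < n → 1 ≤ e' → e' < n → (e = e' ∨ e + e' = n) →
      ∀ c c' : MonoidAlgebra 𝕂 G, (∀ g ∈ c'.coeff.support, g ∉ H) →
      ((A - 1) * ((∑ i ∈ Finset.range e, A ^ i) + c * ahat)) *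
          ((A - 1) * ((∑ i ∈ Finset.range e', A ^ i) + c' * ahat)) =
        (∑ i ∈ Finset.range e, A ^ i) * (A - 1) *
          ((A - 1) * ((∑ i ∈ Finset.range e', A ^ i) + c' * ahat)) ∧
      ((A - 1) * ((∑ i ∈ Finset.range e, A ^ i) + c * ahat)) *
          ((A - 1) * ((∑ i ∈ Finset.range e', A ^ i) + c' * ahat)) ≠ 0 := by
    intro e e' he1 hen he'1 he'n hee c c' hc'
    refine ⟨EQ _ c _ (hcommΔ e), ?_⟩
    rw [EQ _ c _ (hcommΔ e), geom_sum_mul, hahat]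
    exact aux_ne a b n hn ha hbH e e' he1 hen he'1 he'n hee c' hc'
  have hnk1 : 1 ≤ n - k := by omega
  have hnkn : n - k < n := by omega
  have hkadd : k + (n - k) = n := by omega
  have hkadd2 : (n - k) + k = n := by omega
  constructor
  · rintro zα hα zβ hβ
    simp only [Set.mem_insert_iff, Set.mem_singleton_iff] at hα hβ
    rcases hα with rfl | rfl <;> rcases hβ with rfl | rfl | rfl | rfl
    · rw [hxp']
      exact MAIN k k hk1 hkn hk1 hkn (Or.inl rfl) _ _ hcB
    · rw [hxp', hxm']
      exact MAIN k (n - k) hk1 hkn hnk1 hnkn (Or.inr hkadd) _ _ hcCB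
    · rw [hxp', hyp']
      exact MAIN k k hk1 hkn hk1 hkn (Or.inl rfl) _ _ hcAB
    · rw [hxp', hym']
      exact MAIN k (n - k) hk1 hkn hnk1 hnkn (Or.inr hkadd) _ _ hcnB
    · rw [hyp', hxp']
      exact MAIN k k hk1 hkn hk1 hkn (Or.inl rfl) _ _ hcB
    · rw [hyp', hxm']
      exact MAIN k (n - k) hk1 hkn hnk1 hnkn (Or.inr hkadd) _ _ hcCB
    · rw [hyp']
      exact MAIN k k hk1 hkn hk1 hkn (Or.inl rfl) _ _ hcAB
    · rw [hyp', hym']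
      exact MAIN k (n - k) hk1 hkn hnk1 hnkn (Or.inr hkadd) _ _ hcnB
  · rintro zα hα zβ hβ
    simp only [Set.mem_insert_iff, Set.mem_singleton_iff] at hα hβ
    rcases hα with rfl | rfl <;> rcases hβ with rfl | rfl | rfl | rfl
    · rw [hxm', hxp']
      exact MAIN (n - k) k hnk1 hnkn hk1 hkn (Or.inr hkadd2) _ _ hcB
    · rw [hxm']
      exact MAIN (n - k) (n - k) hnk1 hnkn hnk1 hnkn (Or.inl rfl) _ _ hcCB
    · rw [hxm', hyp']
      exact MAIN (n - k) k hnk1 hnkn hk1 hkn (Or.inr hkadd2) _ _ hcAB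
    · rw [hxm', hym']
      exact MAIN (n - k) (n - k) hnk1 hnkn hnk1 hnkn (Or.inl rfl) _ _ hcnB
    · rw [hym', hxp']
      exact MAIN (n - k) k hnk1 hnkn hk1 hkn (Or.inr hkadd2) _ _ hcB
    · rw [hym', hxm']
      exact MAIN (n - k) (n - k) hnk1 hnkn hnk1 hnkn (Or.inl rfl) _ _ hcCB
    · rw [hym', hyp']
      exact MAIN (n - k) k hnk1 hnkn hk1 hkn (Or.inr hkadd2) _ _ hcAB
    · rw [hym']
      exact MAIN (n - k) (n - k) hnk1 hnkn hnk1 hnkn (Or.inl rfl) _ _ hcnB
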